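/- arXiv:1006.3210 — 2 statements merged into one kernel-verified Lean document; each statement's English description precedes it below -/
import Mathlib

section
/- For every natural number n, the operator identity (X + sD)^n = Σ_{k=0}^{n} C(n,k) · H_{n-k}(X,s) · s^k D^k holds as an identity of linear operators on the polynomial ring, where H_{n-k}(X,s) denotes the operator of multiplication by the polynomial H_{n-k}(x,s) and C(n,k) is the ordinary binomial coefficient. -/
/- STATEMENT 0: Burchnall's identity
(X + sD)^n = Σ_{k=0}^{n} C(n,k) · H_{n-k}(X,s) · s^k D^k
as linear operators on F[x], F = ℚ(s). -/

noncomputable section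

/-- The field `ℚ(s)` of rational functions in an indeterminate `s`. -/
abbrev F : Type := RatFunc ℚ

/-- The indeterminate `s`. -/
def s : F := RatFunc.X

/-- The operator `X` of multiplication by `x` on `F[x]`. -/
def Xop : Module.End F (Polynomial F) := LinearMap.mulLeft F Polynomial.X

/-- The operator `D` of formal differentiation `d/dx` on `F[x]`. -/
def D : Module.End F (Polynomial F) := Polynomial.derivative

/-- The Hermite-type polynomials: `H 0 = 1`, `H 1 = x`,
`H n = x·H (n-1) + (n-1)·s·H (n-2)` for `n ≥ 2`. -/
def H : ℕ → Polynomial F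
  | 0 => 1
  | 1 => Polynomial.X
  | n + 2 => Polynomial.X * H (n + 1) + Polynomial.C (((n : F) + 1) * s) * H n


set_option synthInstance.maxHeartbeats 1000000
set_option maxHeartbeats 1000000

lemma H_succ (m : ℕ) : H (m + 2) =
    Polynomial.X * H (m + 1) + Polynomial.C (((m : F) + 1) * s) * H m := rfl

lemma deriv_H : ∀ m : ℕ, Polynomial.derivative (H (m + 1)) = Polynomial.C ((m : F) + 1) * H m
  | 0 => by simp [H]
  | 1 => by
      rw [H_succ 0]
      show _ = Polynomial.C ((0 : F) + 1 + 1) * Polynomial.X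
      simp [H]
      ring
  | (m + 2) => by
      have ih1 := deriv_H (m + 1)
      have ih0 := deriv_H m
      rw [H_succ (m + 1)]
      rw [Polynomial.derivative_add, Polynomial.derivative_mul, Polynomial.derivative_mul,
        Polynomial.derivative_X, Polynomial.derivative_C, ih1, ih0, H_succ m]
      push_cast
      simp only [Polynomial.C_mul, Polynomial.C_add, Polynomial.C_1, map_ofNat]
      ring

lemma step1 (m : ℕ) : (Xop + s • D) * LinearMap.mulLeft F (H m) =
    LinearMap.mulLeft F (H (m + 1)) + LinearMap.mulLeft F (H m) * (s • D) := by
  apply LinearMap.ext; intro q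
  have hd : Polynomial.derivative (H m * q)
      = Polynomial.derivative (H m) * q + H m * Polynomial.derivative q :=
    Polynomial.derivative_mul
  cases m with
  | zero =>
    simp [Xop, D, H, Module.End.mul_apply, LinearMap.mulLeft_apply, Polynomial.smul_eq_C_mul]
  | succ m =>
    simp only [LinearMap.add_apply, Module.End.mul_apply, LinearMap.smul_apply,
      LinearMap.mulLeft_apply, Xop, D, hd, deriv_H m, H_succ m, Polynomial.smul_eq_C_mul,
      Polynomial.C_mul, Polynomial.C_add, Polynomial.C_1]
    ring

lemma step2 (m k : ℕ) : (Xop + s • D) * (LinearMap.mulLeft F (H m) * (s ^ k • D ^ k)) =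
    LinearMap.mulLeft F (H (m + 1)) * (s ^ k • D ^ k)
      + LinearMap.mulLeft F (H m) * (s ^ (k + 1) • D ^ (k + 1)) := by
  rw [← mul_assoc, step1, add_mul, mul_assoc]
  congr 2
  rw [smul_mul_smul_comm, ← pow_succ', ← pow_succ']

theorem burchnall (n : ℕ) :
    (Xop + s • D) ^ n =
      ∑ k ∈ Finset.range (n + 1),
        (n.choose k : F) • (LinearMap.mulLeft F (H (n - k)) * (s ^ k • D ^ k)) := by
  induction n with
  | zero =>
    simp [H, LinearMap.mulLeft_one]
    rfl
  | succ n ih =>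
    have hterm : ∀ k ∈ Finset.range (n + 1),
        (Xop + s • D) * ((n.choose k : F) • (LinearMap.mulLeft F (H (n - k)) * (s ^ k • D ^ k)))
          = (n.choose k : F) • (LinearMap.mulLeft F (H (n + 1 - k)) * (s ^ k • D ^ k))
          + (n.choose k : F) • (LinearMap.mulLeft F (H (n - k)) * (s ^ (k + 1) • D ^ (k + 1))) := by
      intro k hk
      have hk' : k ≤ n := Nat.lt_succ_iff.mp (Finset.mem_range.mp hk)
      rw [mul_smul_comm, step2, Nat.succ_sub hk', smul_add]
    rw [pow_succ', ih, Finset.mul_sum, Finset.sum_congr rfl hterm, Finset.sum_add_distrib]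
    set f : ℕ → Module.End F (Polynomial F) :=
      fun k => LinearMap.mulLeft F (H (n + 1 - k)) * (s ^ k • D ^ k) with hf
    have hg : ∀ k, LinearMap.mulLeft F (H (n - k)) * (s ^ (k + 1) • D ^ (k + 1)) = f (k + 1) := by
      intro k; simp [hf, Nat.succ_sub_succ]
    have hrw2 : (∑ k ∈ Finset.range (n + 1),
        (n.choose k : F) • (LinearMap.mulLeft F (H (n - k)) * (s ^ (k + 1) • D ^ (k + 1))))
        = ∑ k ∈ Finset.range (n + 1), (n.choose k : F) • f (k + 1) := by
      refine Finset.sum_congr rfl fun k _ => by rw [hg]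
    rw [hrw2]
    rw [Finset.sum_range_succ' (fun k => ((n+1).choose k : F) • f k) (n + 1)]
    rw [Finset.sum_range_succ' (fun k => (n.choose k : F) • f k) n]
    have pascal : ∀ i, (((n+1).choose (i+1) : ℕ) : F) = (n.choose i : F) + (n.choose (i+1) : F) := by
      intro i
      rw [Nat.choose_succ_succ]
      push_cast
      ring
    have hsplit : ∀ i ∈ Finset.range (n + 1),
        (((n+1).choose (i+1) : ℕ) : F) • f (i+1)
          = (n.choose (i+1) : F) • f (i+1) + (n.choose i : F) • f (i+1) := by
      intro i _
      rw [pascal, add_smul, add_comm]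
    rw [Finset.sum_congr rfl hsplit, Finset.sum_add_distrib]
    have htail : (∑ i ∈ Finset.range (n + 1), (n.choose (i+1) : F) • f (i+1))
        = ∑ i ∈ Finset.range n, (n.choose (i+1) : F) • f (i+1) := by
      rw [Finset.sum_range_succ, Nat.choose_succ_self]
      simp
    rw [htail]
    simp only [Nat.choose_zero_right, Nat.cast_one]
    abel


end
end

section
/- For every natural number n, applying the operator (X + sD)^n to the constant polynomial 1 yields (X + sD)^n 1 = H_n(x,s) = Σ_{j=0}^{⌊n/2⌋} s^j · n!/(2^j · j! · (n-2j)!) · x^{n-2j}. -/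
/- STATEMENT 2:
(X + sD)^n 1 = H_n(x,s) = Σ_{j=0}^{⌊n/2⌋} s^j · n!/(2^j · j! · (n-2j)!) · x^{n-2j}. -/

noncomputable section

open Polynomial

instance : CharZero F :=
  charZero_of_injective_algebraMap (algebraMap ℚ (RatFunc ℚ)).injective

lemma D_apply (p : Polynomial F) : D p = derivative p := rfl
lemma H_zero : H 0 = 1 := rfl
lemma H_one : H 1 = Polynomial.X := rfl
lemma H_add_two (n : ℕ) :
    H (n+2) = Polynomial.X * H (n + 1) + Polynomial.C (((n : F) + 1) * s) * H n := rfl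

lemma dH : ∀ n : ℕ, D (H (n+1)) = (((n:F)+1)) • H n := by
  intro n
  induction n using Nat.twoStepInduction with
  | zero =>
    rw [H_one, H_zero, D_apply, derivative_X]
    norm_num
  | one =>
    rw [show (1:ℕ)+1 = 2 from rfl, H_add_two 0, H_one, H_zero, D_apply]
    rw [derivative_add, derivative_mul, derivative_mul, derivative_X, derivative_C, mul_one,
      derivative_one]
    simp only [smul_eq_C_mul, map_add, map_mul, map_one, Polynomial.C_eq_natCast, map_ofNat,
      Nat.cast_add, Nat.cast_one, Nat.cast_zero]
    ring
  | more n ih1 ih2 =>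
    rw [H_add_two (n+1), D_apply, derivative_add, derivative_mul, derivative_mul,
      derivative_X, derivative_C, ← D_apply (H (n+2)), ← D_apply (H (n+1)), ih1, ih2,
      H_add_two n]
    simp only [smul_eq_C_mul, map_add, map_mul, map_one, Polynomial.C_eq_natCast, map_ofNat,
      Nat.cast_add, Nat.cast_one, Nat.cast_zero]
    ring

lemma part1 (n : ℕ) : ((Xop + s • D) ^ n) (1 : Polynomial F) = H n := by
  induction n with
  | zero => rw [pow_zero]; rfl
  | succ n ih =>
    rw [pow_succ', Module.End.mul_apply, ih]
    cases n with
    | zero =>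
      show Xop (H 0) + s • D (H 0) = H 1
      rw [H_zero, H_one, D_apply, derivative_one, smul_zero, add_zero]
      show Polynomial.X * 1 = Polynomial.X
      rw [mul_one]
    | succ m =>
      show Xop (H (m+1)) + s • D (H (m+1)) = H (m+2)
      rw [dH, show Xop (H (m+1)) = Polynomial.X * H (m+1) from rfl, H_add_two m,
        smul_smul, smul_eq_C_mul]
      ring_nf

/-! Coefficients -/

def c (n j : ℕ) : F :=
  s ^ j * (n.factorial : F) / (2 ^ j * (j.factorial : F) * ((n - 2 * j).factorial : F))

def q (n j : ℕ) : ℚ :=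
  (n.factorial : ℚ) / (2 ^ j * (j.factorial : ℚ) * ((n - 2 * j).factorial : ℚ))

lemma c_eq (n j : ℕ) : c n j = s ^ j * algebraMap ℚ F (q n j) := by
  unfold c q
  rw [map_div₀, map_mul, map_mul, map_pow, map_ofNat, map_natCast, map_natCast, map_natCast,
    mul_div_assoc]

lemma fac_ne (m : ℕ) : ((m.factorial : ℚ)) ≠ 0 :=
  Nat.cast_ne_zero.mpr (Nat.factorial_pos m).ne'

lemma qkey (n j : ℕ) (h : 2*(j+1) ≤ n+1) :
    q (n+2) (j+1) = q (n+1) (j+1) + ((n:ℚ)+1) * q n j := by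
  obtain ⟨k, rfl⟩ : ∃ k, n = 2*j+1+k := ⟨n - (2*j+1), by omega⟩
  unfold q
  rw [show 2*j+1+k+2 - 2*(j+1) = k+1 by omega, show 2*j+1+k+1 - 2*(j+1) = k by omega,
    show 2*j+1+k - 2*j = k+1 by omega,
    show 2*j+1+k+2 = (2*j+1+k+1)+1 by omega,
    Nat.factorial_succ (2*j+1+k+1), show 2*j+1+k+1 = (2*j+1+k)+1 from rfl,
    Nat.factorial_succ (2*j+1+k), Nat.factorial_succ j, Nat.factorial_succ k]
  have hj : ((j.factorial : ℚ)) ≠ 0 := fac_ne j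
  have hk : ((k.factorial : ℚ)) ≠ 0 := fac_ne k
  push_cast
  field_simp
  ring

lemma qtop (m : ℕ) : q (m+m+2) (m+1) = (((m+m : ℕ):ℚ)+1) * q (m+m) m := by
  unfold q
  rw [show m+m+2 - 2*(m+1) = 0 by omega, show m+m - 2*m = 0 by omega,
    show m+m+2 = (m+m+1)+1 by omega, Nat.factorial_succ (m+m+1),
    show m+m+1 = (m+m)+1 from rfl, Nat.factorial_succ (m+m),
    Nat.factorial_succ m]
  have hm : ((m.factorial : ℚ)) ≠ 0 := fac_ne m
  push_cast
  field_simp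
  ring

lemma key (n j : ℕ) (h : 2*(j+1) ≤ n+1) :
    c (n+2) (j+1) = c (n+1) (j+1) + ((n:F)+1) * s * c n j := by
  rw [c_eq, c_eq, c_eq, qkey n j h, map_add, map_mul, map_add, map_natCast, map_one]
  ring

lemma keytop (m : ℕ) : c (m+m+2) (m+1) = (((m+m : ℕ):F)+1) * s * c (m+m) m := by
  rw [c_eq, c_eq, qtop]
  simp only [map_mul, map_add, map_one, map_ofNat, map_natCast]
  ring

lemma c_zero (n : ℕ) : c n 0 = 1 := by
  rw [c_eq]
  unfold q
  simp only [pow_zero, one_mul, Nat.mul_zero, Nat.sub_zero, Nat.factorial_zero,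
    Nat.cast_one, mul_one]
  rw [div_self (fac_ne n), map_one]

/-! Part 2 -/

lemma part2 : ∀ n : ℕ, H n = ∑ j ∈ Finset.range (n / 2 + 1), C (c n j) * X ^ (n - 2 * j) := by
  intro n
  induction n using Nat.twoStepInduction with
  | zero =>
    rw [H_zero]
    simp [c_zero]
  | one =>
    rw [H_one]
    simp [c_zero]
  | more n ih ih2 =>
    rw [H_add_two n, ih, ih2]
    have hA : (Polynomial.X : Polynomial F) *
        ∑ j ∈ Finset.range ((n+1)/2+1), C (c (n+1) j) * X ^ (n+1-2*j)
        = ∑ j ∈ Finset.range ((n+1)/2+1), C (c (n+1) j) * X ^ (n+2-2*j) := by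
      rw [Finset.mul_sum]
      refine Finset.sum_congr rfl fun j hj => ?_
      have hj' : 2*j ≤ n+1 := by
        have := Finset.mem_range.mp hj; omega
      rw [show n+2-2*j = (n+1-2*j)+1 by omega, pow_succ]
      ring
    have hB : (C (((n:F)+1) * s)) * ∑ j ∈ Finset.range (n/2+1), C (c n j) * X ^ (n-2*j)
        = ∑ j ∈ Finset.range (n/2+1), C (((n:F)+1) * s * c n j) * X ^ (n-2*j) := by
      rw [Finset.mul_sum]
      refine Finset.sum_congr rfl fun j _ => ?_
      simp only [C_mul]
      ring
    rw [hA, hB]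
    rcases Nat.even_or_odd n with ⟨m, rfl⟩ | ⟨m, hm⟩
    · -- even : n = m + m
      rw [show (m+m+2)/2+1 = m+2 by omega, show (m+m+1)/2+1 = m+1 by omega,
        show (m+m)/2+1 = m+1 by omega]
      rw [Finset.sum_range_succ' (fun j => C (c (m+m+2) j) * X ^ (m+m+2-2*j)) (m+1),
        Finset.sum_range_succ (fun j => C (c (m+m+2) (j+1)) * X ^ (m+m+2-2*(j+1))) m,
        Finset.sum_range_succ' (fun j => C (c (m+m+1) j) * X ^ (m+m+2-2*j)) m,
        Finset.sum_range_succ (fun j => C ((((m+m:ℕ):F)+1) * s * c (m+m) j) * X ^ (m+m-2*j)) m]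
      have esum : (∑ j ∈ Finset.range m, C (c (m+m+2) (j+1)) * X ^ (m+m+2-2*(j+1)))
          = (∑ j ∈ Finset.range m, C (c (m+m+1) (j+1)) * X ^ (m+m+2-2*(j+1)))
            + ∑ j ∈ Finset.range m, C ((((m+m:ℕ):F)+1) * s * c (m+m) j) * X ^ (m+m-2*j) := by
        rw [← Finset.sum_add_distrib]
        refine Finset.sum_congr rfl fun j hj => ?_
        have hj' : 2*(j+1) ≤ m+m+1 := by
          have := Finset.mem_range.mp hj; omega
        rw [key (m+m) j hj', C_add, add_mul,
          show m+m+2-2*(j+1) = m+m-2*j by omega]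
      have etop : C (c (m+m+2) (m+1)) * X ^ (m+m+2-2*(m+1))
          = C ((((m+m:ℕ):F)+1) * s * c (m+m) m) * X ^ (m+m-2*m) := by
        rw [keytop m, show m+m+2-2*(m+1) = 0 by omega, show m+m-2*m = 0 by omega]
      rw [esum, etop, c_zero, c_zero]
      ring
    · -- odd : n = 2*m+1
      subst hm
      rw [show (2*m+1+2)/2+1 = m+2 by omega, show (2*m+1+1)/2+1 = m+2 by omega,
        show (2*m+1)/2+1 = m+1 by omega]
      rw [Finset.sum_range_succ' (fun j => C (c (2*m+1+2) j) * X ^ (2*m+1+2-2*j)) (m+1),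
        Finset.sum_range_succ' (fun j => C (c (2*m+1+1) j) * X ^ (2*m+1+2-2*j)) (m+1)]
      have esum : (∑ j ∈ Finset.range (m+1), C (c (2*m+1+2) (j+1)) * X ^ (2*m+1+2-2*(j+1)))
          = (∑ j ∈ Finset.range (m+1), C (c (2*m+1+1) (j+1)) * X ^ (2*m+1+2-2*(j+1)))
            + ∑ j ∈ Finset.range (m+1), C ((((2*m+1:ℕ):F)+1) * s * c (2*m+1) j) * X ^ (2*m+1-2*j) := by
        rw [← Finset.sum_add_distrib]
        refine Finset.sum_congr rfl fun j hj => ?_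
        have hj' : 2*(j+1) ≤ 2*m+1+1 := by
          have := Finset.mem_range.mp hj; omega
        rw [key (2*m+1) j hj', C_add, add_mul,
          show 2*m+1+2-2*(j+1) = 2*m+1-2*j by omega]
      rw [esum, c_zero, c_zero]
      ring


theorem apply_to_one (n : ℕ) :
    ((Xop + s • D) ^ n) (1 : Polynomial F) = H n ∧
    H n = ∑ j ∈ Finset.range (n / 2 + 1),
      Polynomial.C (s ^ j * (n.factorial : F) /
          (2 ^ j * (j.factorial : F) * ((n - 2 * j).factorial : F))) *
        Polynomial.X ^ (n - 2 * j) := by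
  exact ⟨part1 n, part2 n⟩

end
end
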